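/- Under assumptions (iv), (v), (vi), for every B ∈ ℬ and every B'' ∈ ℬ'' one has P({X' ∈ B''} ∩ C ∩ {X ∈ B}) = P({X' ∈ B''} ∩ C) · π(B). (Proposition 6.1 of the paper.) -/

import Mathlib

open MeasureTheory ProbabilityTheory

/-- Proposition 6.1 of Fill–Machida–Murdoch–Rosenthal:
under assumptions (iv), (v), (vi), for every `B ∈ ℬ` and every `B'' ∈ ℬ''`
(i.e. `B'' = B' ∩ F` with `F ∈ ℬ'`),
`P({X' ∈ B''} ∩ C ∩ {X ∈ B}) = P({X' ∈ B''} ∩ C) ⬝ π(B)`. -/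
theorem stmt0
    {Ω 𝓧 𝓧' : Type*} [MeasurableSpace Ω] [MeasurableSpace 𝓧] [MeasurableSpace 𝓧']
    (P : Measure Ω) [IsProbabilityMeasure P]
    (π : Measure 𝓧) [IsProbabilityMeasure π]
    (B' : Set 𝓧')
    (X : Ω → 𝓧) (X' : Ω → 𝓧') (Y : Ω → 𝓧') (C : Set Ω)
    -- (iv): X is measurable with law π
    (hXmeas : Measurable X) (hXlaw : P.map X = π)
    -- (v): for every B'' in the trace σ-field on B',
    -- {X' ∈ B''} ∩ C and {Y ∈ B''} ∩ C are measurable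
    (hv : ∀ F : Set 𝓧', MeasurableSet F →
      MeasurableSet (X' ⁻¹' (B' ∩ F) ∩ C) ∧ MeasurableSet (Y ⁻¹' (B' ∩ F) ∩ C))
    -- (vi): P({X' ∈ B''} ∩ C | X ∈ B) = P({Y ∈ B''} ∩ C) whenever π(B) > 0
    (hvi : ∀ F : Set 𝓧', MeasurableSet F → ∀ B : Set 𝓧, MeasurableSet B → 0 < π B →
      P[X' ⁻¹' (B' ∩ F) ∩ C | X ⁻¹' B] = P (Y ⁻¹' (B' ∩ F) ∩ C)) :
    ∀ B : Set 𝓧, MeasurableSet B → ∀ F : Set 𝓧', MeasurableSet F →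
      P (X' ⁻¹' (B' ∩ F) ∩ C ∩ X ⁻¹' B) = P (X' ⁻¹' (B' ∩ F) ∩ C) * π B := by
  intro B hB F hF
  set A := X' ⁻¹' (B' ∩ F) ∩ C with hA
  have hPXB : ∀ B : Set 𝓧, MeasurableSet B → P (X ⁻¹' B) = π B := by
    intro B hB
    rw [← hXlaw, Measure.map_apply hXmeas hB]
  have hPA : P A = P (Y ⁻¹' (B' ∩ F) ∩ C) := by
    have h := hvi F hF Set.univ MeasurableSet.univ (by simp)
    rwa [Set.preimage_univ, cond_univ] at h
  rcases eq_or_lt_of_le (zero_le : 0 ≤ π B) with h0 | hpos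
  · have hXB0 : P (X ⁻¹' B) = 0 := by rw [hPXB B hB, ← h0]
    have : P (A ∩ X ⁻¹' B) = 0 :=
      le_antisymm (le_trans (measure_mono Set.inter_subset_right) (le_of_eq hXB0)) zero_le
    rw [this, ← h0, mul_zero]
  · have h := hvi F hF B hB hpos
    rw [hPA.symm] at h
    rw [cond_apply (hXmeas hB)] at h
    have hXBne : P (X ⁻¹' B) ≠ 0 := by rw [hPXB B hB]; exact hpos.ne'
    have hXBfin : P (X ⁻¹' B) ≠ ⊤ := measure_ne_top _ _
    have : P (X ⁻¹' B ∩ A) = P A * P (X ⁻¹' B) := by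
      rw [← h, mul_comm, ← mul_assoc, ENNReal.mul_inv_cancel hXBne hXBfin, one_mul]
    rw [Set.inter_comm] at this
    rw [this, hPXB B hB]
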